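/- arXiv:2603.03184 — 3 statements merged into one kernel-verified Lean document; each statement's English description precedes it below -/
import Mathlib

section
/- For all real a > 0 and b > 0: the limit as γ → ∞ of (∫_{0}^{∞} ln(1 + γ·a·x)·b·e^{-b·x} dx - ln γ) equals ln a - ln b - C, where C is the Euler–Mascheroni constant. Consequently, the limit as γ → ∞ of (∫_{0}^{∞} ln(1 + γ·a·x)·b·e^{-b·x} dx)/ln γ equals 1. -/
open MeasureTheory Filter Real

open Set

lemma gammaScaled {b : ℝ} (hb : 0 < b) {s : ℝ} (hs : 0 < s) :
    IntegrableOn (fun x : ℝ => Real.exp (-(b*x)) * x ^ (s-1)) (Ioi 0) := by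
  have h := Real.GammaIntegral_convergent hs
  have h2 : IntegrableOn (fun x : ℝ => Real.exp (-(b*x)) * (b*x) ^ (s-1)) (Ioi 0) := by
    have := (integrableOn_Ioi_comp_mul_left_iff
      (fun x : ℝ => Real.exp (-x) * x ^ (s-1)) 0 hb).2 (by simpa using h)
    simpa using this
  have h3 : IntegrableOn
      (fun x : ℝ => ((b:ℝ) ^ (s-1))⁻¹ * (Real.exp (-(b*x)) * (b*x) ^ (s-1))) (Ioi 0) :=
    h2.const_mul ((b:ℝ) ^ (s-1))⁻¹
  apply h3.congr_fun ?_ measurableSet_Ioi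
  intro x hx
  dsimp only
  rw [Real.mul_rpow hb.le (le_of_lt hx)]
  field_simp [(Real.rpow_pos_of_pos hb (s-1)).ne']

lemma int_id_exp {b : ℝ} (hb : 0 < b) :
    IntegrableOn (fun x : ℝ => x * Real.exp (-(b*x))) (Ioi 0) := by
  apply (gammaScaled hb (by norm_num : (0:ℝ) < 2)).congr_fun ?_ measurableSet_Ioi
  intro x hx
  dsimp only
  rw [show (2:ℝ)-1 = 1 by norm_num, Real.rpow_one]
  exact mul_comm _ _

lemma abs_log_le {x : ℝ} (hx : 0 < x) : |Real.log x| ≤ 2 * (x ^ ((1/2:ℝ)-1) + x ^ ((3/2:ℝ)-1)) := by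
  have hy : 0 < Real.sqrt x := Real.sqrt_pos.2 hx
  have h1 : Real.log x = 2 * Real.log (Real.sqrt x) := by
    rw [Real.log_sqrt hx.le]; ring
  have h2 : |Real.log (Real.sqrt x)| ≤ (Real.sqrt x)⁻¹ + Real.sqrt x := by
    rw [abs_le]
    constructor
    · have := Real.log_le_sub_one_of_pos (inv_pos.2 hy)
      rw [Real.log_inv] at this
      nlinarith [hy.le, inv_pos.2 hy]
    · have := Real.log_le_sub_one_of_pos hy
      nlinarith [inv_pos.2 hy]
  have e1 : x ^ ((1/2:ℝ)-1) = (Real.sqrt x)⁻¹ := by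
    rw [show (1/2:ℝ)-1 = -(1/2) by norm_num, Real.rpow_neg hx.le, ← Real.sqrt_eq_rpow]
  have e2 : x ^ ((3/2:ℝ)-1) = Real.sqrt x := by
    rw [show (3/2:ℝ)-1 = (1/2:ℝ) by norm_num, ← Real.sqrt_eq_rpow]
  rw [h1, abs_mul, abs_two, e1, e2]
  nlinarith [h2]

lemma int_abs_log_exp {b : ℝ} (hb : 0 < b) :
    IntegrableOn (fun x : ℝ => |Real.log x| * Real.exp (-(b*x))) (Ioi 0) := by
  have hg : IntegrableOn (fun x : ℝ =>
      2 * (Real.exp (-(b*x)) * x ^ ((1/2:ℝ)-1)) + 2 * (Real.exp (-(b*x)) * x ^ ((3/2:ℝ)-1)))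
      (Ioi 0) :=
    ((gammaScaled hb (by norm_num)).const_mul 2).add ((gammaScaled hb (by norm_num)).const_mul 2)
  apply Integrable.mono' hg
  · exact ((Real.measurable_log.abs.mul (by fun_prop)).aestronglyMeasurable)
  · filter_upwards [ae_restrict_mem measurableSet_Ioi] with x hx
    have h := abs_log_le (hx : (0:ℝ) < x)
    have hexp : 0 < Real.exp (-(b*x)) := Real.exp_pos _
    rw [Real.norm_eq_abs, abs_mul, abs_abs, abs_of_pos hexp]
    nlinarith [abs_nonneg (Real.log x), Real.rpow_nonneg (le_of_lt hx) ((1/2:ℝ)-1),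
      Real.rpow_nonneg (le_of_lt hx) ((3/2:ℝ)-1)]

lemma int_log_exp {b : ℝ} (hb : 0 < b) :
    IntegrableOn (fun x : ℝ => Real.log x * Real.exp (-(b*x))) (Ioi 0) := by
  apply Integrable.mono' (int_abs_log_exp hb)
  · exact ((Real.measurable_log.mul (by fun_prop)).aestronglyMeasurable)
  · filter_upwards with x
    rw [Real.norm_eq_abs, abs_mul, abs_of_pos (Real.exp_pos _)]

lemma int_exp_scaled {b : ℝ} (hb : 0 < b) :
    ∫ x : ℝ in Ioi 0, Real.exp (-(b*x)) = b⁻¹ := by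
  have := integral_comp_mul_left_Ioi (fun t : ℝ => Real.exp (-t)) 0 hb
  simp only [mul_zero] at this
  rw [this, integral_exp_neg_Ioi_zero, smul_eq_mul, mul_one]

lemma mass_one {b : ℝ} (hb : 0 < b) :
    ∫ x : ℝ in Ioi 0, b * Real.exp (-(b*x)) = 1 := by
  rw [integral_const_mul, int_exp_scaled hb, mul_inv_cancel₀ hb.ne']

lemma integral_log_mul_exp_neg : ∫ t in Set.Ioi (0:ℝ), Real.log t * Real.exp (-t)
    = -Real.eulerMascheroniConstant := by
  have h1 : HasDerivAt Complex.GammaIntegral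
      (∫ t : ℝ in Ioi 0, (t:ℂ) ^ ((1:ℂ) - 1) * (Real.log t * Real.exp (-t))) 1 :=
    Complex.hasDerivAt_GammaIntegral (by simp)
  have hD : (∫ t : ℝ in Ioi 0, (t:ℂ) ^ ((1:ℂ) - 1) * (Real.log t * Real.exp (-t)))
      = ((∫ t : ℝ in Ioi 0, Real.log t * Real.exp (-t) : ℝ) : ℂ) := by
    rw [show (∫ t : ℝ in Ioi 0, (t:ℂ) ^ ((1:ℂ) - 1) * (Real.log t * Real.exp (-t)))
        = ∫ t : ℝ in Ioi 0, ((Real.log t * Real.exp (-t) : ℝ) : ℂ) from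
      setIntegral_congr_fun measurableSet_Ioi (fun t _ => by push_cast; simp)]
    exact integral_ofReal
  rw [hD] at h1
  have h2 : HasDerivAt Complex.Gamma
      ((∫ t : ℝ in Ioi 0, Real.log t * Real.exp (-t) : ℝ) : ℂ) 1 := by
    apply h1.congr_of_eventuallyEq
    have : {s : ℂ | 0 < s.re} ∈ nhds (1:ℂ) := by
      apply (isOpen_lt continuous_const Complex.continuous_re).mem_nhds; simp
    filter_upwards [this] with s hs
    exact Complex.Gamma_eq_integral hs
  have h3 : HasDerivAt Real.Gamma
      ((((∫ t : ℝ in Ioi 0, Real.log t * Real.exp (-t) : ℝ) : ℂ)).re) 1 := by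
    have h2' : HasDerivAt Complex.Gamma
        ((∫ t : ℝ in Ioi 0, Real.log t * Real.exp (-t) : ℝ) : ℂ) ((1:ℝ):ℂ) := by
      simpa using h2
    have := h2'.real_of_complex
    apply this.congr_of_eventuallyEq
    filter_upwards with x
    simp [Complex.Gamma_ofReal]
  have h4 := Real.hasDerivAt_Gamma_one
  have := h3.unique h4
  simpa using this

lemma int_log_exp1 : IntegrableOn (fun t : ℝ => Real.log t * Real.exp (-t)) (Ioi 0) := by
  have := int_log_exp one_pos
  simpa using this

lemma int_exp1 : IntegrableOn (fun t : ℝ => Real.exp (-t)) (Ioi 0) := by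
  have := exp_neg_integrableOn_Ioi 0 one_pos
  simpa using this

lemma log_exp_val {b : ℝ} (hb : 0 < b) :
    ∫ x : ℝ in Ioi 0, Real.log x * (b * Real.exp (-(b*x)))
      = -Real.eulerMascheroniConstant - Real.log b := by
  have hsub := integral_comp_mul_left_Ioi (fun t : ℝ => Real.log (t/b) * (b * Real.exp (-t))) 0 hb
  simp only [mul_zero] at hsub
  have h1 : ∫ x : ℝ in Ioi 0, Real.log x * (b * Real.exp (-(b*x)))
      = ∫ x : ℝ in Ioi 0, (fun t : ℝ => Real.log (t/b) * (b * Real.exp (-t))) (b*x) := by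
    apply setIntegral_congr_fun measurableSet_Ioi
    intro x hx
    dsimp only
    rw [mul_div_cancel_left₀ _ hb.ne']
  have h2 : ∫ t : ℝ in Ioi 0, Real.log (t/b) * (b*Real.exp (-t))
      = ∫ t : ℝ in Ioi 0, (b*(Real.log t * Real.exp (-t)) - (Real.log b * b) * Real.exp (-t)) := by
    apply setIntegral_congr_fun measurableSet_Ioi
    intro t ht
    dsimp only
    rw [Real.log_div (ne_of_gt ht) hb.ne']
    ring
  rw [h1, hsub, smul_eq_mul, h2,
    integral_sub (int_log_exp1.const_mul b) (int_exp1.const_mul _),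
    integral_const_mul, integral_const_mul, integral_log_mul_exp_neg, integral_exp_neg_Ioi_zero]
  field_simp

/-- Corollary 3 (natural-log form): for `a, b > 0`,
`∫_0^∞ ln(1 + γax) b e^{-bx} dx - ln γ → ln a - ln b - C` as `γ → ∞`, where `C` is the
Euler–Mascheroni constant; consequently the high-SNR slope is one. -/
theorem sensing_centric_ECR_high_SNR (a b : ℝ) (ha : 0 < a) (hb : 0 < b) :
    Tendsto (fun γ : ℝ =>
        (∫ x in Set.Ioi (0 : ℝ), Real.log (1 + γ * a * x) * (b * Real.exp (-b * x)))
          - Real.log γ)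
      atTop (nhds (Real.log a - Real.log b - Real.eulerMascheroniConstant)) ∧
    Tendsto (fun γ : ℝ =>
        (∫ x in Set.Ioi (0 : ℝ), Real.log (1 + γ * a * x) * (b * Real.exp (-b * x)))
          / Real.log γ)
      atTop (nhds 1) := by
  have hEb : IntegrableOn (fun x : ℝ => b * Real.exp (-(b*x))) (Ioi 0) := by
    have := (exp_neg_integrableOn_Ioi 0 hb).const_mul b
    simpa [neg_mul, IntegrableOn] using this
  -- integrability of shifted-log integrand, and domination
  have hLb : IntegrableOn (fun x : ℝ => Real.log x * (b * Real.exp (-(b*x)))) (Ioi 0) := by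
    have h' : IntegrableOn (fun x : ℝ => b * (Real.log x * Real.exp (-(b*x)))) (Ioi 0) :=
      (int_log_exp hb).const_mul b
    apply h'.congr_fun ?_ measurableSet_Ioi
    intro x _; dsimp only; ring
  have hXb : IntegrableOn (fun x : ℝ => x * Real.exp (-(b*x))) (Ioi 0) := int_id_exp hb
  -- value of limit integral
  have hC : (∫ x in Ioi (0:ℝ), Real.log (a*x) * (b * Real.exp (-(b*x))))
      = Real.log a - Real.log b - Real.eulerMascheroniConstant := by
    have heq : ∀ x ∈ Ioi (0:ℝ), Real.log (a*x) * (b * Real.exp (-(b*x)))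
        = Real.log a * (b * Real.exp (-(b*x))) + Real.log x * (b * Real.exp (-(b*x))) := by
      intro x hx
      rw [Real.log_mul ha.ne' (ne_of_gt hx)]
      ring
    rw [setIntegral_congr_fun measurableSet_Ioi heq,
      integral_add (hEb.const_mul _) hLb, integral_const_mul, mass_one hb, log_exp_val hb]
    ring
  -- Step A : rewrite the difference as a single integral
  have hA : ∀ᶠ γ : ℝ in atTop,
      (∫ x in Set.Ioi (0 : ℝ), Real.log (1 + γ * a * x) * (b * Real.exp (-b * x)))
          - Real.log γ
        = ∫ x in Ioi (0:ℝ), Real.log (a*x + γ⁻¹) * (b * Real.exp (-(b*x))) := by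
    filter_upwards [eventually_ge_atTop (1:ℝ)] with γ hγ
    have hγ0 : (0:ℝ) < γ := lt_of_lt_of_le one_pos hγ
    have hI1 : IntegrableOn (fun x : ℝ => Real.log (1 + γ*a*x) * (b * Real.exp (-(b*x))))
        (Ioi 0) := by
      apply Integrable.mono' ((hXb.const_mul (γ*a*b)))
      · exact ((Real.measurable_log.comp (by fun_prop)).mul (by fun_prop)).aestronglyMeasurable
      · filter_upwards [ae_restrict_mem measurableSet_Ioi] with x hx
        have hx0 : (0:ℝ) < x := hx
        have hpos' : (0:ℝ) < γ*a*x := by positivity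
        have harg : (1:ℝ) ≤ 1 + γ*a*x := by linarith
        have hle : Real.log (1 + γ*a*x) ≤ γ*a*x := by
          have := Real.log_le_sub_one_of_pos (lt_of_lt_of_le one_pos harg)
          linarith
        have hnn : 0 ≤ Real.log (1 + γ*a*x) := Real.log_nonneg harg
        rw [Real.norm_eq_abs, abs_mul, abs_of_nonneg hnn,
          abs_of_pos (by positivity : (0:ℝ) < b * Real.exp (-(b*x)))]
        calc Real.log (1 + γ*a*x) * (b * Real.exp (-(b*x)))
            ≤ (γ*a*x) * (b * Real.exp (-(b*x))) :=
              mul_le_mul_of_nonneg_right hle (by positivity)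
          _ = γ*a*b * (x * Real.exp (-(b*x))) := by ring
    have hconst : (∫ x in Ioi (0:ℝ), Real.log γ * (b * Real.exp (-(b*x))))
        = Real.log γ := by
      rw [integral_const_mul, mass_one hb, mul_one]
    have hgoal1 : (∫ x in Set.Ioi (0:ℝ), Real.log (1 + γ * a * x) * (b * Real.exp (-b * x)))
        = ∫ x in Ioi (0:ℝ), Real.log (1 + γ*a*x) * (b * Real.exp (-(b*x))) := by
      simp_rw [neg_mul]
    rw [hgoal1, ← hconst, ← integral_sub hI1 (hEb.const_mul _)]
    apply setIntegral_congr_fun measurableSet_Ioi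
    intro x hx
    have hx0 : (0:ℝ) < x := hx
    have h1 : a*x + γ⁻¹ = (1 + γ*a*x)/γ := by field_simp; ring
    dsimp only
    rw [h1, Real.log_div (by positivity) hγ0.ne']
    ring
  -- Step B : dominated convergence
  have hB : Tendsto (fun γ : ℝ => ∫ x in Ioi (0:ℝ), Real.log (a*x + γ⁻¹) * (b * Real.exp (-(b*x))))
      atTop (nhds (∫ x in Ioi (0:ℝ), Real.log (a*x) * (b * Real.exp (-(b*x))))) := by
    apply tendsto_integral_filter_of_dominated_convergence
      (fun x : ℝ => (|Real.log a| + |Real.log x| + a*x) * (b * Real.exp (-(b*x))))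
    · apply Eventually.of_forall
      intro γ
      exact ((Real.measurable_log.comp (by fun_prop)).mul (by fun_prop)).aestronglyMeasurable
    · filter_upwards [eventually_ge_atTop (1:ℝ)] with γ hγ
      filter_upwards [ae_restrict_mem measurableSet_Ioi] with x hx
      have hx0 : (0:ℝ) < x := hx
      have hγ0 : (0:ℝ) < γ := lt_of_lt_of_le one_pos hγ
      have hε0 : (0:ℝ) < γ⁻¹ := by positivity
      have hε1 : γ⁻¹ ≤ 1 := by
        rw [inv_le_one_iff₀]; right; exact hγ
      have hax : (0:ℝ) < a*x := by positivity
      have habs : |Real.log (a*x + γ⁻¹)| ≤ |Real.log (a*x)| + a*x := by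
        rcases le_or_gt 1 (a*x + γ⁻¹) with h | h
        · rw [abs_of_nonneg (Real.log_nonneg h)]
          have h2 := Real.log_le_sub_one_of_pos (lt_of_lt_of_le one_pos h)
          have h3 : Real.log (a*x + γ⁻¹) ≤ a*x := by linarith
          nlinarith [abs_nonneg (Real.log (a*x))]
        · have h2 : a*x < 1 := by linarith
          have hmono : Real.log (a*x) ≤ Real.log (a*x + γ⁻¹) :=
            Real.log_le_log hax (by linarith)
          have hneg : Real.log (a*x + γ⁻¹) < 0 := Real.log_neg (by positivity) h
          have hneg2 : Real.log (a*x) < 0 := by linarith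
          rw [abs_of_neg hneg, abs_of_neg hneg2]
          linarith
      have hsplit : |Real.log (a*x)| ≤ |Real.log a| + |Real.log x| := by
        rw [Real.log_mul ha.ne' hx0.ne']
        exact abs_add_le _ _
      rw [Real.norm_eq_abs, abs_mul,
        abs_of_pos (by positivity : (0:ℝ) < b * Real.exp (-(b*x)))]
      have hkey : |Real.log (a*x + γ⁻¹)| ≤ |Real.log a| + |Real.log x| + a*x := by linarith
      exact mul_le_mul_of_nonneg_right hkey (by positivity)
    · -- integrability of the bound
      have hsum : IntegrableOn (fun x : ℝ =>
          |Real.log a| * (b * Real.exp (-(b*x))) + b * (|Real.log x| * Real.exp (-(b*x)))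
            + (a*b) * (x * Real.exp (-(b*x)))) (Ioi 0) :=
        ((hEb.const_mul _).add ((int_abs_log_exp hb).const_mul b)).add (hXb.const_mul _)
      apply hsum.congr_fun ?_ measurableSet_Ioi
      intro x _
      dsimp only
      ring
    · filter_upwards [ae_restrict_mem measurableSet_Ioi] with x hx
      have hx0 : (0:ℝ) < x := hx
      have hax : (0:ℝ) < a*x := by positivity
      have h1 : Tendsto (fun γ : ℝ => a*x + γ⁻¹) atTop (nhds (a*x)) := by
        have := tendsto_const_nhds (x := a*x) (f := atTop (α := ℝ)) |>.add tendsto_inv_atTop_zero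
        simpa using this
      have h2 : Tendsto (fun γ : ℝ => Real.log (a*x + γ⁻¹)) atTop (nhds (Real.log (a*x))) :=
        ((Real.continuousAt_log hax.ne').tendsto).comp h1
      exact h2.mul_const _
  have key : Tendsto (fun γ : ℝ =>
      (∫ x in Set.Ioi (0 : ℝ), Real.log (1 + γ * a * x) * (b * Real.exp (-b * x)))
        - Real.log γ)
      atTop (nhds (Real.log a - Real.log b - Real.eulerMascheroniConstant)) := by
    rw [← hC]
    exact hB.congr' (hA.mono fun γ h => h.symm)
  refine ⟨key, ?_⟩
  have h0 : Tendsto (fun γ : ℝ =>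
      ((∫ x in Set.Ioi (0 : ℝ), Real.log (1 + γ * a * x) * (b * Real.exp (-b * x)))
        - Real.log γ) / Real.log γ) atTop (nhds 0) :=
    key.div_atTop Real.tendsto_log_atTop
  have h2 : Tendsto (fun γ : ℝ =>
      ((∫ x in Set.Ioi (0 : ℝ), Real.log (1 + γ * a * x) * (b * Real.exp (-b * x)))
        - Real.log γ) / Real.log γ + 1) atTop (nhds (0+1)) :=
    h0.add tendsto_const_nhds
  rw [zero_add] at h2
  apply h2.congr'
  filter_upwards [eventually_gt_atTop (1:ℝ)] with γ hγ
  have hlogγ : Real.log γ ≠ 0 := ne_of_gt (Real.log_pos hγ)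
  field_simp
  rw [sub_add_cancel]
  congr 1; ext x; ring
end

section
/- Let E be a complex inner product space, let h_s, h_c ∈ E with h_c ≠ 0, and set G = ‖h_s‖², g = ‖h_c‖², ρ = ⟨h_s, h_c⟩. Let τ be a real number with 0 ≤ τ ≤ |ρ|²/(|ρ|² + g²). Then w* = h_c/‖h_c‖ and Υ* = g/(1-τ) satisfy: ‖w*‖ = 1, |⟨h_s, w*⟩|² ≥ τ·Υ*, |⟨h_c, w*⟩|² ≥ (1-τ)·Υ*, and for every w ∈ E with ‖w‖ = 1 and every Υ ≥ 0 with |⟨h_s, w⟩|² ≥ τ·Υ and |⟨h_c, w⟩|² ≥ (1-τ)·Υ, one has Υ ≤ Υ*. -/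
open scoped ComplexInnerProductSpace

/-- First regime of Lemma 6 / Theorem 7: with `g = ‖h_c‖²`, `ρ = ⟨h_s, h_c⟩`, and
`0 ≤ τ ≤ |ρ|²/(|ρ|² + g²)`, the communication-centric beamformer `w* = h_c/‖h_c‖`
together with `Υ* = g/(1-τ)` is feasible and optimal for the Pareto problem. -/
theorem pareto_regime_comm_centric
    {E : Type*} [NormedAddCommGroup E] [InnerProductSpace ℂ E]
    (hs hc : E) (hhc : hc ≠ 0) (τ : ℝ) (hτ0 : 0 ≤ τ)
    (hτ1 : τ ≤ ‖⟪hs, hc⟫‖ ^ 2 / (‖⟪hs, hc⟫‖ ^ 2 + (‖hc‖ ^ 2) ^ 2)) :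
    ‖(‖hc‖⁻¹ • hc : E)‖ = 1 ∧
    τ * (‖hc‖ ^ 2 / (1 - τ)) ≤ ‖⟪hs, (‖hc‖⁻¹ • hc : E)⟫‖ ^ 2 ∧
    (1 - τ) * (‖hc‖ ^ 2 / (1 - τ)) ≤ ‖⟪hc, (‖hc‖⁻¹ • hc : E)⟫‖ ^ 2 ∧
    ∀ (w : E) (Υ : ℝ), ‖w‖ = 1 → 0 ≤ Υ →
      τ * Υ ≤ ‖⟪hs, w⟫‖ ^ 2 → (1 - τ) * Υ ≤ ‖⟪hc, w⟫‖ ^ 2 →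
        Υ ≤ ‖hc‖ ^ 2 / (1 - τ) := by
  have hcn : (0:ℝ) < ‖hc‖ := norm_pos_iff.mpr hhc
  set r : ℝ := ‖⟪hs, hc⟫‖ ^ 2 with hr
  have hr0 : 0 ≤ r := sq_nonneg _
  have hg4 : (0:ℝ) < (‖hc‖ ^ 2) ^ 2 := by positivity
  have hden : (0:ℝ) < r + (‖hc‖ ^ 2) ^ 2 := by linarith
  have hτlt1 : τ < 1 := by
    have h1 : r / (r + (‖hc‖ ^ 2) ^ 2) < 1 := by
      rw [div_lt_one hden]; linarith
    linarith
  have h1τ : (0:ℝ) < 1 - τ := by linarith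
  have hkey : τ * (r + (‖hc‖ ^ 2) ^ 2) ≤ r := (le_div_iff₀ hden).mp hτ1
  -- norms of inner products with the normalized beamformer
  have hsmul : (‖hc‖⁻¹ • hc : E) = ((‖hc‖⁻¹ : ℝ) : ℂ) • hc :=
    (Complex.coe_smul _ _).symm
  have hnorm_s : ‖⟪hs, (‖hc‖⁻¹ • hc : E)⟫‖ = ‖hc‖⁻¹ * ‖⟪hs, hc⟫‖ := by
    rw [hsmul, inner_smul_right, norm_mul, Complex.norm_real, Real.norm_eq_abs,
      abs_of_nonneg (by positivity)]
  have hnorm_c : ‖⟪hc, (‖hc‖⁻¹ • hc : E)⟫‖ = ‖hc‖ := by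
    rw [hsmul, inner_smul_right, norm_mul, Complex.norm_real, Real.norm_eq_abs,
      abs_of_nonneg (by positivity), inner_self_eq_norm_sq_to_K,
      norm_pow, RCLike.norm_ofReal, abs_of_nonneg hcn.le]
    field_simp
  refine ⟨?_, ?_, ?_, ?_⟩
  · rw [norm_smul, Real.norm_eq_abs, abs_of_nonneg (by positivity)]
    field_simp
  · rw [hnorm_s, mul_pow]
    have hinv : (‖hc‖⁻¹) ^ 2 = (‖hc‖ ^ 2)⁻¹ := by rw [inv_pow]
    rw [hinv, ← hr, inv_mul_eq_div, mul_div_assoc', div_le_div_iff₀ h1τ (by positivity)]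
    nlinarith
  · rw [hnorm_c]
    rw [mul_div_cancel₀ _ (ne_of_gt h1τ)]
  · intro w Υ hw hΥ0 _ hcw
    have hCS : ‖⟪hc, w⟫‖ ≤ ‖hc‖ * ‖w‖ := norm_inner_le_norm hc w
    have : ‖⟪hc, w⟫‖ ^ 2 ≤ ‖hc‖ ^ 2 := by
      rw [hw, mul_one] at hCS
      nlinarith [norm_nonneg ⟪hc, w⟫]
    rw [le_div_iff₀ h1τ, mul_comm]
    linarith
end

section
/- Let E be a complex inner product space, let h_s, h_c ∈ E with h_s ≠ 0, and set G = ‖h_s‖², g = ‖h_c‖², ρ = ⟨h_s, h_c⟩. Let τ be a real number with G²/(G² + |ρ|²) ≤ τ ≤ 1. Then w* = h_s/‖h_s‖ and Υ* = G/τ satisfy: ‖w*‖ = 1, |⟨h_s, w*⟩|² ≥ τ·Υ*, |⟨h_c, w*⟩|² ≥ (1-τ)·Υ*, and for every w ∈ E with ‖w‖ = 1 and every Υ ≥ 0 with |⟨h_s, w⟩|² ≥ τ·Υ and |⟨h_c, w⟩|² ≥ (1-τ)·Υ, one has Υ ≤ Υ*. -/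
open scoped ComplexInnerProductSpace

/-- Third regime of Lemma 6 / Theorem 7: with `G = ‖h_s‖²`, `ρ = ⟨h_s, h_c⟩`, and
`G²/(G² + |ρ|²) ≤ τ ≤ 1`, the sensing-centric beamformer `w* = h_s/‖h_s‖`
together with `Υ* = G/τ` is feasible and optimal for the Pareto problem. -/
theorem pareto_regime_sensing_centric
    {E : Type*} [NormedAddCommGroup E] [InnerProductSpace ℂ E]
    (hs hc : E) (hhs : hs ≠ 0) (τ : ℝ)
    (hτ0 : (‖hs‖ ^ 2) ^ 2 / ((‖hs‖ ^ 2) ^ 2 + ‖⟪hs, hc⟫‖ ^ 2) ≤ τ) (hτ1 : τ ≤ 1) :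
    ‖(‖hs‖⁻¹ • hs : E)‖ = 1 ∧
    τ * (‖hs‖ ^ 2 / τ) ≤ ‖⟪hs, (‖hs‖⁻¹ • hs : E)⟫‖ ^ 2 ∧
    (1 - τ) * (‖hs‖ ^ 2 / τ) ≤ ‖⟪hc, (‖hs‖⁻¹ • hs : E)⟫‖ ^ 2 ∧
    ∀ (w : E) (Υ : ℝ), ‖w‖ = 1 → 0 ≤ Υ →
      τ * Υ ≤ ‖⟪hs, w⟫‖ ^ 2 → (1 - τ) * Υ ≤ ‖⟪hc, w⟫‖ ^ 2 →
        Υ ≤ ‖hs‖ ^ 2 / τ := by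
  have hn : (0:ℝ) < ‖hs‖ := norm_pos_iff.mpr hhs
  have hG : (0:ℝ) < ‖hs‖ ^ 2 := by positivity
  have hden : (0:ℝ) < (‖hs‖ ^ 2) ^ 2 + ‖⟪hs, hc⟫‖ ^ 2 := by positivity
  have hτpos : 0 < τ :=
    lt_of_lt_of_le (div_pos (by positivity) hden) hτ0
  have hkey : (‖hs‖ ^ 2) ^ 2 ≤ τ * ((‖hs‖ ^ 2) ^ 2 + ‖⟪hs, hc⟫‖ ^ 2) :=
    (div_le_iff₀ hden).mp hτ0
  -- inner products with the normalized vector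
  have hinner_s : ⟪hs, (‖hs‖⁻¹ • hs : E)⟫ = (‖hs‖ : ℂ) := by
    rw [inner_smul_right_eq_smul, inner_self_eq_norm_sq_to_K]
    rw [Complex.real_smul]
    have : (‖hs‖ : ℂ) ≠ 0 := by exact_mod_cast hn.ne'
    field_simp
    push_cast
    field_simp
    rfl
  have hinner_c : ‖⟪hc, (‖hs‖⁻¹ • hs : E)⟫‖ ^ 2 = ‖⟪hc, hs⟫‖ ^ 2 / ‖hs‖ ^ 2 := by
    rw [inner_smul_right_eq_smul, norm_smul]
    rw [mul_pow]
    simp [abs_of_pos (inv_pos.mpr hn)]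
    field_simp
  refine ⟨?_, ?_, ?_, ?_⟩
  · rw [norm_smul]
    simp [abs_of_pos (inv_pos.mpr hn)]
    field_simp
  · rw [hinner_s, mul_div_cancel₀ _ (ne_of_gt hτpos)]
    simp
  · rw [hinner_c]
    have hsym : ‖⟪hc, hs⟫‖ = ‖⟪hs, hc⟫‖ := norm_inner_symm hc hs
    rw [hsym, ← mul_div_assoc, div_le_div_iff₀ hτpos hG]
    nlinarith [hkey]
  · intro w Υ hw hΥ hws _
    have hcs : ‖⟪hs, w⟫‖ ≤ ‖hs‖ * ‖w‖ := norm_inner_le_norm hs w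
    have : ‖⟪hs, w⟫‖ ^ 2 ≤ ‖hs‖ ^ 2 := by
      rw [hw, mul_one] at hcs
      nlinarith [norm_nonneg (⟪hs, w⟫)]
    rw [le_div_iff₀ hτpos]
    nlinarith
end
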